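/- Let B be a bipartite matching covered graph with bipartition classes V₁ and V₂, and let X ⊆ V(B) be a set of vertices with |X| ≥ 3 and |V(B) ∖ X| ≥ 3. Then ∂(X) is a tight cut of B if and only if there exists i ∈ {1,2} such that |X ∩ V_i| = |X ∩ V_{3−i}| − 1 and N_B(X ∩ V_i) ⊆ X. -/

import Mathlib

open SimpleGraph

namespace PaperMM

/-- A (finite, simple) graph bundled with its vertex type. -/
structure Graph : Type 1 where
  V : Type
  adj : SimpleGraph V

/-- `G` has a perfect matching. -/
def HasPM {V : Type} (G : SimpleGraph V) : Prop :=
  ∃ M : G.Subgraph, M.IsPerfectMatching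

/-- `X ⊆ V(G)` is conformal: `G − X` has a perfect matching. -/
def ConformalSet {V : Type} (G : SimpleGraph V) (X : Set V) : Prop :=
  HasPM (G.induce Xᶜ)

/-- The result of bicontracting the degree-2 vertex `v` with neighbours `u₀, u₁`:
the three vertices are identified into (the vertex previously called) `v`,
loops and parallel edges being suppressed. -/
def bicontractAt {V : Type} (G : SimpleGraph V) (v u₀ u₁ : V) :
    SimpleGraph {x : V // x ≠ u₀ ∧ x ≠ u₁} where
  Adj a b :=
    (a.1 ≠ v ∧ b.1 ≠ v ∧ G.Adj a.1 b.1) ∨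
    (a.1 = v ∧ b.1 ≠ v ∧ (G.Adj b.1 u₀ ∨ G.Adj b.1 u₁)) ∨
    (b.1 = v ∧ a.1 ≠ v ∧ (G.Adj a.1 u₀ ∨ G.Adj a.1 u₁))
  symm := by
    constructor
    rintro a b (⟨h1, h2, h3⟩ | ⟨h1, h2, h3⟩ | ⟨h1, h2, h3⟩)
    · exact Or.inl ⟨h2, h1, h3.symm⟩
    · exact Or.inr (Or.inr ⟨h1, h2, h3⟩)
    · exact Or.inr (Or.inl ⟨h1, h2, h3⟩)
  loopless := by
    constructor
    rintro a (⟨h1, _h2, h3⟩ | ⟨h1, h2, _h3⟩ | ⟨h1, h2, _h3⟩)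
    · exact G.loopless.irrefl _ h3
    · exact h2 h1
    · exact h2 h1

/-- `H` is obtained from `G` by a single bicontraction of a vertex of degree two. -/
def Bicontract (G H : Graph) : Prop :=
  ∃ v u₀ u₁ : G.V, u₀ ≠ u₁ ∧ G.adj.neighborSet v = {u₀, u₁} ∧
    Nonempty (H.adj ≃g bicontractAt G.adj v u₀ u₁)

/-- `H` is a matching minor of `G`: a graph isomorphic to `H` can be obtained from
a conformal subgraph of `G` by repeated bicontractions. -/
def IsMatchingMinor (H G : Graph) : Prop :=
  ∃ (H' : G.adj.Subgraph) (K : Graph),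
    ConformalSet G.adj H'.verts ∧
    Relation.ReflTransGen Bicontract ⟨↥H'.verts, H'.coe⟩ K ∧
    Nonempty (H.adj ≃g K.adj)

/-- The edge cut `∂(X)`: all edges of `G` with exactly one endpoint in `X`. -/
def edgeCut {V : Type} (G : SimpleGraph V) (X : Set V) : Set (Sym2 V) :=
  {e | e ∈ G.edgeSet ∧ ∃ a b : V, e = s(a, b) ∧ a ∈ X ∧ b ∉ X}

/-- `∂(X)` is a tight cut: every perfect matching contains exactly one of its edges. -/
def IsTightCut {V : Type} (G : SimpleGraph V) (X : Set V) : Prop :=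
  ∀ M : G.Subgraph, M.IsPerfectMatching → (M.edgeSet ∩ edgeCut G X).ncard = 1

/-- `G` is matching covered: connected and every edge lies in a perfect matching. -/
def MatchingCovered {V : Type} (G : SimpleGraph V) : Prop :=
  G.Connected ∧ ∀ e ∈ G.edgeSet, ∃ M : G.Subgraph, M.IsPerfectMatching ∧ e ∈ M.edgeSet

/-- `(V₁, V₂)` is a bipartition of `G` into two independent sets. -/
def IsBipartition {V : Type} (G : SimpleGraph V) (V₁ V₂ : Set V) : Prop :=
  V₁ ∪ V₂ = Set.univ ∧ V₁ ∩ V₂ = ∅ ∧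
    ∀ a b : V, G.Adj a b → ((a ∈ V₁ ∧ b ∈ V₂) ∨ (a ∈ V₂ ∧ b ∈ V₁))

def IsBipartiteGraph {V : Type} (G : SimpleGraph V) : Prop :=
  ∃ V₁ V₂ : Set V, IsBipartition G V₁ V₂

/-- A brace: a bipartite matching covered graph with no non-trivial tight cut. -/
def IsBrace {V : Type} (G : SimpleGraph V) : Prop :=
  IsBipartiteGraph G ∧ MatchingCovered G ∧
    ¬ ∃ X : Set V, IsTightCut G X ∧ 2 ≤ X.ncard ∧ 2 ≤ Xᶜ.ncard

/-- A perfect matching decomposition: a cubic tree `tree` together with a bijection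
from its leaves to the vertices of `G`. -/
structure PMDecomp {V : Type} (G : SimpleGraph V) where
  T : Type
  tree : SimpleGraph T
  isTree : tree.IsTree
  cubic : ∀ t : T, (tree.neighborSet t).ncard = 1 ∨ (tree.neighborSet t).ncard = 3
  leafEquiv : {t : T // (tree.neighborSet t).ncard = 1} ≃ V

/-- The side of the partition of `V(G)` induced by the tree edge `{t₁, t₂}`
corresponding to `t₁`. -/
def PMDecomp.sideSet {V : Type} {G : SimpleGraph V} (D : PMDecomp G) (t₁ t₂ : D.T) :
    Set V :=
  {v | (D.tree.deleteEdges {s(t₁, t₂)}).Reachable t₁ (D.leafEquiv.symm v).1}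

/-- The matching porosity of `X`: the maximum number of edges of `∂(X)` in a
perfect matching of `G`. -/
noncomputable def matchingPorosity {V : Type} (G : SimpleGraph V) (X : Set V) : ℕ :=
  sSup {n | ∃ M : G.Subgraph, M.IsPerfectMatching ∧ n = (M.edgeSet ∩ edgeCut G X).ncard}

/-- The width of a perfect matching decomposition. -/
noncomputable def PMDecomp.width {V : Type} {G : SimpleGraph V} (D : PMDecomp G) : ℕ :=
  sSup {n | ∃ t₁ t₂ : D.T, D.tree.Adj t₁ t₂ ∧ n = matchingPorosity G (D.sideSet t₁ t₂)}

/-- The perfect matching width of `G`. -/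
noncomputable def pmw {V : Type} (G : SimpleGraph V) : ℕ :=
  sInf {w | ∃ D : PMDecomp G, D.width ≤ w}

/-! ### Concrete graphs -/

/-- The `(n × m)`-grid. -/
def gridGraph (n m : ℕ) : SimpleGraph (Fin n × Fin m) :=
  SimpleGraph.fromRel (fun p q =>
    (p.1 = q.1 ∧ p.2.1 + 1 = q.2.1) ∨ (p.2 = q.2 ∧ p.1.1 + 1 = q.1.1))

/-- The single-crossing matching grid of order `k`: the `(2k × 2k)`-grid whose
central 4-cycle (`(k,k),(k,k+1),(k+1,k+1),(k+1,k)` in 1-based coordinates) is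
identified with a 4-cycle of `K_{3,3}`; `Sum.inr 0` and `Sum.inr 1` are the two
remaining vertices of `K_{3,3}`. -/
def singleCrossingMatchingGrid (k : ℕ) :
    SimpleGraph ((Fin (2*k) × Fin (2*k)) ⊕ Fin 2) :=
  SimpleGraph.fromRel (fun x y =>
    (∃ p q : Fin (2*k) × Fin (2*k), x = Sum.inl p ∧ y = Sum.inl q ∧
      ((p.1 = q.1 ∧ p.2.1 + 1 = q.2.1) ∨ (p.2 = q.2 ∧ p.1.1 + 1 = q.1.1))) ∨
    (∃ p : Fin (2*k) × Fin (2*k), x = Sum.inl p ∧ y = Sum.inr 0 ∧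
      ((p.1.1 = k - 1 ∧ p.2.1 = k) ∨ (p.1.1 = k ∧ p.2.1 = k - 1))) ∨
    (∃ p : Fin (2*k) × Fin (2*k), x = Sum.inl p ∧ y = Sum.inr 1 ∧
      ((p.1.1 = k - 1 ∧ p.2.1 = k - 1) ∨ (p.1.1 = k ∧ p.2.1 = k))) ∨
    (x = Sum.inr 0 ∧ y = Sum.inr 1))

/-- The inside-out single-crossing matching grid of order `k`: the `(2k × 2k)`-grid
together with the two remaining vertices of a `K_{3,3}` whose chosen 4-cycle has been
identified with the four corners (its edges being deleted). -/
def insideOutSingleCrossingMatchingGrid (k : ℕ) :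
    SimpleGraph ((Fin (2*k) × Fin (2*k)) ⊕ Fin 2) :=
  SimpleGraph.fromRel (fun x y =>
    (∃ p q : Fin (2*k) × Fin (2*k), x = Sum.inl p ∧ y = Sum.inl q ∧
      ((p.1 = q.1 ∧ p.2.1 + 1 = q.2.1) ∨ (p.2 = q.2 ∧ p.1.1 + 1 = q.1.1))) ∨
    (∃ p : Fin (2*k) × Fin (2*k), x = Sum.inl p ∧ y = Sum.inr 0 ∧
      ((p.1.1 = 0 ∧ p.2.1 = 2*k - 1) ∨ (p.1.1 = 2*k - 1 ∧ p.2.1 = 0))) ∨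
    (∃ p : Fin (2*k) × Fin (2*k), x = Sum.inl p ∧ y = Sum.inr 1 ∧
      ((p.1.1 = 0 ∧ p.2.1 = 0) ∨ (p.1.1 = 2*k - 1 ∧ p.2.1 = 2*k - 1))) ∨
    (x = Sum.inr 0 ∧ y = Sum.inr 1))

/-- The cylindrical matching grid `CG_k` of order `k` (0-based coordinates:
vertex `(i, j)` is `v_{j+1}^{i+1}` of the paper). -/
def cylindricalMatchingGrid (k : ℕ) : SimpleGraph (Fin k × Fin (4*k)) :=
  SimpleGraph.fromRel (fun x y =>
    (x.1 = y.1 ∧ (x.2.1 + 1) % (4*k) = y.2.1) ∨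
    (x.1.1 + 1 = y.1.1 ∧ x.2.1 % 4 = 0 ∧ x.2.1 + 1 = y.2.1) ∨
    (y.1.1 + 1 = x.1.1 ∧ x.2.1 % 4 = 2 ∧ x.2.1 + 1 = y.2.1))

/-- The edges of the canonical matching of `CG_k`. -/
def cmgCanonicalEdges (k : ℕ) : Set (Sym2 (Fin k × Fin (4*k))) :=
  {e | ∃ x y : Fin k × Fin (4*k), e = s(x, y) ∧ x.1 = y.1 ∧
        x.2.1 % 2 = 0 ∧ x.2.1 + 1 = y.2.1}

/-- The edges of the alternating matching of `CG_k` (for `k` even): the canonical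
matching with `M ∩ E(C_i)` replaced by `E(C_i) ∖ M` on every odd (1-based) cycle. -/
def cmgAlternatingEdges (k : ℕ) : Set (Sym2 (Fin k × Fin (4*k))) :=
  {e | ∃ x y : Fin k × Fin (4*k), e = s(x, y) ∧ x.1 = y.1 ∧
        (x.2.1 + 1) % (4*k) = y.2.1 ∧ (x.1.1 + x.2.1) % 2 = 1}

/-- The cylindrical single-crossing grid of order `h`: `CG_{4h}` plus the two
crossing edges `v^1_1 v^1_{8h+4}` and `v^1_{4h+1} v^1_{12h+4}`. -/
def cylindricalSingleCrossingGrid (h : ℕ) :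
    SimpleGraph (Fin (4*h) × Fin (4*(4*h))) :=
  cylindricalMatchingGrid (4*h) ⊔ SimpleGraph.fromRel (fun x y =>
    x.1.1 = 0 ∧ y.1.1 = 0 ∧
      ((x.2.1 = 0 ∧ y.2.1 = 8*h + 3) ∨ (x.2.1 = 4*h ∧ y.2.1 = 12*h + 3)))

/-- The cylindrical single-jump grid of order `k`: `CG_k` plus the edge `v^k_1 v^1_2`. -/
def cylindricalSingleJumpGrid (k : ℕ) : SimpleGraph (Fin k × Fin (4*k)) :=
  cylindricalMatchingGrid k ⊔ SimpleGraph.fromRel (fun x y =>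
    x.1.1 = k - 1 ∧ x.2.1 = 0 ∧ y.1.1 = 0 ∧ y.2.1 = 1)

/-- The shallow vortex matching grid `SVMG_k` of order `k`. -/
def shallowVortexMatchingGrid (k : ℕ) : SimpleGraph (Fin (2*k) × Fin (8*k)) :=
  SimpleGraph.fromRel (fun x y =>
    (x.1 = y.1 ∧ (x.2.1 + 1) % (8*k) = y.2.1) ∨
    (x.1.1 + 1 = y.1.1 ∧ x.2.1 % 4 = 0 ∧ x.2.1 + 1 = y.2.1) ∨
    (y.1.1 + 1 = x.1.1 ∧ x.2.1 % 4 = 2 ∧ x.2.1 + 1 = y.2.1) ∨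
    (x.1.1 = 0 ∧ y.1.1 = 0 ∧ x.2.1 % 4 = 1 ∧ (x.2.1 + 5) % (8*k) = y.2.1))

/-- The refined vortex `RV_k` of order `k`. -/
def refinedVortex (k : ℕ) : SimpleGraph (Fin (2*k) × Fin (4*k)) :=
  SimpleGraph.fromRel (fun x y =>
    (x.1 = y.1 ∧ (x.2.1 + 1) % (4*k) = y.2.1) ∨
    (x.1.1 + 1 = y.1.1 ∧ x.2 = y.2) ∨
    (x.1.1 = 0 ∧ y.1.1 = 0 ∧ x.2.1 % 4 = 1 ∧ (x.2.1 + 3) % (4*k) = y.2.1))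

/-- The (ordinary) single-crossing grid of order `n`: the `(2n × 2n)`-grid plus the
two crossing edges `{(n,n),(n+1,n+1)}` and `{(n,n+1),(n+1,n)}` (1-based). -/
def singleCrossingGrid (n : ℕ) : SimpleGraph (Fin (2*n) × Fin (2*n)) :=
  gridGraph (2*n) (2*n) ⊔ SimpleGraph.fromRel (fun p q =>
    (p.1.1 = n - 1 ∧ p.2.1 = n - 1 ∧ q.1.1 = n ∧ q.2.1 = n) ∨
    (p.1.1 = n - 1 ∧ p.2.1 = n ∧ q.1.1 = n ∧ q.2.1 = n - 1))

/-! ### M-conformality -/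

/-- `X` is `M`-conformal: every vertex outside `X` is matched by `M` to a vertex
outside `X`, i.e. `M ∩ E(G − X)` is a perfect matching of `G − X`. -/
def MConformalSet {V : Type} {G : SimpleGraph V} (M : G.Subgraph) (X : Set V) : Prop :=
  ∀ v ∈ Xᶜ, ∃ w ∈ Xᶜ, M.Adj v w

/-- A walk is internally `M`-conformal: it alternates between edges outside `M`
and edges of `M`, starting and ending with edges not in `M`. -/
def InternallyMConformal {V : Type} {G : SimpleGraph V} (M : G.Subgraph)
    {a b : V} (P : G.Walk a b) : Prop :=
  ∀ (i : ℕ) (h : i < P.edges.length), (P.edges.get ⟨i, h⟩ ∈ M.edgeSet ↔ i % 2 = 1)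

/-! ### Subdivisions -/

/-- A model of a subdivision of `H` inside `B`: branch vertices together with
internally disjoint paths representing the edges of `H`. -/
structure SubdivisionModel {V U : Type} (B : SimpleGraph V) (H : SimpleGraph U) where
  branch : U → V
  branch_inj : Function.Injective branch
  path : ∀ ⦃u w : U⦄, H.Adj u w → B.Walk (branch u) (branch w)
  path_isPath : ∀ ⦃u w : U⦄ (h : H.Adj u w), (path h).IsPath
  path_symm : ∀ ⦃u w : U⦄ (h : H.Adj u w), path h.symm = (path h).reverse
  branch_meet : ∀ ⦃u w : U⦄ (h : H.Adj u w) (z : U),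
      branch z ∈ (path h).support → z = u ∨ z = w
  path_disjoint : ∀ ⦃u w u' w' : U⦄ (h : H.Adj u w) (h' : H.Adj u' w'),
      s(u, w) ≠ s(u', w') → ∀ x : V, x ∈ (path h).support → x ∈ (path h').support →
        (x = branch u ∨ x = branch w) ∧ (x = branch u' ∨ x = branch w')

/-- The vertices of the subdivision in the host graph. -/
def SubdivisionModel.verts {V U : Type} {B : SimpleGraph V} {H : SimpleGraph U}
    (S : SubdivisionModel B H) : Set V :=
  {x | ∃ u w : U, ∃ h : H.Adj u w, x ∈ (S.path h).support}

/-- The edges of the subdivision in the host graph. -/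
def SubdivisionModel.edges' {V U : Type} {B : SimpleGraph V} {H : SimpleGraph U}
    (S : SubdivisionModel B H) : Set (Sym2 V) :=
  {e | ∃ u w : U, ∃ h : H.Adj u w, e ∈ (S.path h).edges}

/-- A model of a bisubdivision: every edge of `H` is replaced by a path of odd
length (i.e. every edge is subdivided an even number of times). -/
structure BisubdivisionModel {V U : Type} (B : SimpleGraph V) (H : SimpleGraph U)
    extends SubdivisionModel B H where
  path_odd : ∀ ⦃u w : U⦄ (h : H.Adj u w), Odd (path h).length

/-- `M` contains the canonical matching of the (bi)subdivision `S` of `CG_N`: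
`M ∩ E(W)` is a perfect matching of `W` in which every branch vertex is matched
along the subdivided image of the canonical-matching edge at the corresponding
grid vertex. -/
def ContainsCanonical {V : Type} {B : SimpleGraph V} {N : ℕ}
    (S : SubdivisionModel B (cylindricalMatchingGrid N)) (M : B.Subgraph) : Prop :=
  (∀ x ∈ S.verts, ∃ y ∈ S.verts, M.Adj x y ∧ s(x, y) ∈ S.edges') ∧
  (∀ (u : Fin N × Fin (4*N)) (y : V), M.Adj (S.branch u) y →
    ∃ w : Fin N × Fin (4*N), ∃ h : (cylindricalMatchingGrid N).Adj u w,
      s(u, w) ∈ cmgCanonicalEdges N ∧ s(S.branch u, y) ∈ (S.path h).edges)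

/-- The vertex set, in the host graph, of the subdivided image of the `j`-th
(0-based) concentric cycle of `CG_N`. -/
def cycVerts {V : Type} {B : SimpleGraph V} {N : ℕ}
    (S : SubdivisionModel B (cylindricalMatchingGrid N)) (j : ℕ) : Set V :=
  {x | ∃ u w : Fin N × Fin (4*N), ∃ h : (cylindricalMatchingGrid N).Adj u w,
      u.1.1 = j ∧ w.1.1 = j ∧ x ∈ (S.path h).support}

/-! ### Separations, minors, connectivity -/

/-- `(A, B)` is a separation of `G`. -/
def IsSeparation {V : Type} (G : SimpleGraph V) (A B : Set V) : Prop :=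
  A ∪ B = Set.univ ∧ ∀ a b : V, G.Adj a b → a ∈ A \ B → b ∉ B \ A

/-- `H` is a minor of `G` (branch-set model). -/
def IsMinor {U V : Type} (H : SimpleGraph U) (G : SimpleGraph V) : Prop :=
  ∃ φ : U → Set V,
    (∀ u, (φ u).Nonempty) ∧
    (∀ u, ∀ x, ∀ hx : x ∈ φ u, ∀ y, ∀ hy : y ∈ φ u,
      (G.induce (φ u)).Reachable ⟨x, hx⟩ ⟨y, hy⟩) ∧
    (Pairwise fun u w => Disjoint (φ u) (φ w)) ∧
    (∀ u w : U, H.Adj u w → ∃ x ∈ φ u, ∃ y ∈ φ w, G.Adj x y)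

/-- `G` is quasi-4-connected: 3-connected and every separation of order 3 has a
side containing at most one extra vertex. -/
def QuasiFourConnected {V : Type} (G : SimpleGraph V) : Prop :=
  (4 ≤ Nat.card V ∧
    ∀ A B : Set V, IsSeparation G A B → (A ∩ B).ncard ≤ 2 → A ⊆ B ∨ B ⊆ A) ∧
  (∀ A B : Set V, IsSeparation G A B → (A ∩ B).ncard = 3 →
    (A \ B).ncard ≤ 1 ∨ (B \ A).ncard ≤ 1)

/-! ### Walls -/

/-- The `(2n × n)`-grid with every odd edge of every odd column and every even edge
of every even column deleted (1-based parities). -/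
def preWall (n : ℕ) : SimpleGraph (Fin (2*n) × Fin n) :=
  SimpleGraph.fromRel (fun p q =>
    (p.1 = q.1 ∧ p.2.1 + 1 = q.2.1) ∨
    (p.2 = q.2 ∧ p.1.1 + 1 = q.1.1 ∧ ¬ p.1.1 % 2 = p.2.1 % 2))

/-- The vertices of the elementary `n`-wall: all vertices of `preWall n` of degree
at least two. -/
def elementaryWallVerts (n : ℕ) : Set (Fin (2*n) × Fin n) :=
  {v | 2 ≤ ((preWall n).neighborSet v).ncard}

/-- The elementary `n`-wall. -/
def elementaryWall (n : ℕ) : SimpleGraph ↥(elementaryWallVerts n) :=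
  (preWall n).induce (elementaryWallVerts n)

/-- The vertices on the perimeter of the elementary `n`-wall. -/
def wallPerimSet (n : ℕ) : Set (Fin (2*n) × Fin n) :=
  {v | v.1.1 = 0 ∨ v.1.1 = 2*n - 1 ∨ v.2.1 = 0 ∨ v.2.1 = n - 1}

/-- The (1-based) index of the concentric cycle of the centred layering of the
elementary `n`-wall containing a given vertex. -/
def wallRingIdx (n : ℕ) (v : Fin (2*n) × Fin n) : ℕ :=
  max ((if v.1.1 < n then n - 1 - v.1.1 else v.1.1 - n) / 2)
      (if v.2.1 < n / 2 then n / 2 - 1 - v.2.1 else v.2.1 - n / 2) + 1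

/-- The vertex set, in the host graph, of the `r`-th concentric cycle of a wall
given by a subdivision model. -/
def wallRingVertsG {V : Type} {G : SimpleGraph V} {n : ℕ}
    (S : SubdivisionModel G (elementaryWall n)) (r : ℕ) : Set V :=
  {x | ∃ u w, ∃ h : (elementaryWall n).Adj u w,
      wallRingIdx n u.1 = r ∧ wallRingIdx n w.1 = r ∧ x ∈ (S.path h).support}

/-- The vertex set, in the host graph, of the union of the first `r` concentric
cycles of a wall given by a subdivision model. -/
def wallInnerVertsG {V : Type} {G : SimpleGraph V} {n : ℕ}
    (S : SubdivisionModel G (elementaryWall n)) (r : ℕ) : Set V :=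
  {x | ∃ u w, ∃ h : (elementaryWall n).Adj u w,
      wallRingIdx n u.1 = wallRingIdx n w.1 ∧ wallRingIdx n u.1 ≤ r ∧
      x ∈ (S.path h).support}

/-- The vertex set, in the host graph, of the perimeter of a wall given by a
subdivision model. -/
def wallPerimVertsG {V : Type} {G : SimpleGraph V} {n : ℕ}
    (S : SubdivisionModel G (elementaryWall n)) : Set V :=
  {x | ∃ u w, ∃ h : (elementaryWall n).Adj u w,
      u.1 ∈ wallPerimSet n ∧ w.1 ∈ wallPerimSet n ∧ x ∈ (S.path h).support}

/-- The (1-based) index of the concentric cycle of the centred layering of the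
`(n × n)`-grid (`n` even) containing a given vertex. -/
def gridRing (n : ℕ) (p : Fin n × Fin n) : ℕ :=
  max (if p.1.1 < n / 2 then n / 2 - 1 - p.1.1 else p.1.1 - n / 2)
      (if p.2.1 < n / 2 then n / 2 - 1 - p.2.1 else p.2.1 - n / 2) + 1

/-! ### Matrices and permanents -/

/-- The permanent of an `n × n` matrix of naturals. -/
def perm (n : ℕ) (A : Matrix (Fin n) (Fin n) ℕ) : ℕ :=
  ∑ σ : Equiv.Perm (Fin n), ∏ i : Fin n, A i (σ i)

/-- The bipartite graph `B(A)` associated with a 0/1 matrix `A`: two copies of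
`{1,…,n}`, with `uᵢ` adjacent to `wⱼ` iff `A i j = 1`. -/
def matrixGraph (n : ℕ) (A : Matrix (Fin n) (Fin n) ℕ) :
    SimpleGraph (Fin n ⊕ Fin n) :=
  SimpleGraph.fromRel (fun x y => ∃ i j : Fin n, x = Sum.inl i ∧ y = Sum.inr j ∧ A i j = 1)

/-- The last index of `Fin n` (row/column `n`). -/
def lastIdx (n : ℕ) (_hn : 2 ≤ n) : Fin n := ⟨n - 1, by omega⟩

/-- The second-to-last index of `Fin n` (row/column `n − 1`). -/
def sndIdx (n : ℕ) (_hn : 2 ≤ n) : Fin n := ⟨n - 2, by omega⟩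

/-- The bicontraction of `A` at its last row: replace column `n−1` by the entrywise
maximum of columns `n−1` and `n`, then delete row `n` and column `n`. -/
def bicontractMatrix (n : ℕ) (hn : 2 ≤ n) (A : Matrix (Fin n) (Fin n) ℕ) :
    Matrix (Fin (n-1)) (Fin (n-1)) ℕ :=
  fun j i =>
    if (i : ℕ) = n - 2 then
      max (A (Fin.castLE (Nat.sub_le n 1) j) (sndIdx n hn))
          (A (Fin.castLE (Nat.sub_le n 1) j) (lastIdx n hn))
    else A (Fin.castLE (Nat.sub_le n 1) j) (Fin.castLE (Nat.sub_le n 1) i)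

end PaperMM
namespace PaperMM

theorem matching_count (V : Type) [Finite V] (B : SimpleGraph V) (V₁ V₂ : Set V)
    (hbip : IsBipartition B V₁ V₂) (X : Set V)
    (M : B.Subgraph) (hM : M.IsPerfectMatching) :
    ∃ a1 a2 c1 c2 : ℕ,
      (X ∩ V₁).ncard = a1 + a2 ∧ (X ∩ V₂).ncard = c1 + c2 ∧ a1 = c1 ∧
      (M.edgeSet ∩ edgeCut B X).ncard = a2 + c2 ∧
      (a2 = 0 ↔ ∀ v ∈ X ∩ V₁, ∀ w, M.Adj v w → w ∈ X) ∧
      (c2 = 0 ↔ ∀ v ∈ X ∩ V₂, ∀ w, M.Adj v w → w ∈ X) := by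
  obtain ⟨hun, hdis, hadj⟩ := hbip
  choose f hf hu using fun v => hM.1 (hM.2 v)
  have hinv : ∀ v, f (f v) = v := fun v => (hu (f v) v (hf v).symm).symm
  have hfinj : Function.Injective f := Function.LeftInverse.injective hinv
  have hside : ∀ v, v ∈ V₁ → v ∈ V₂ → False := by
    intro v h1 h2
    have : v ∈ V₁ ∩ V₂ := ⟨h1, h2⟩
    rw [hdis] at this; exact this
  have hopp1 : ∀ v, v ∈ V₁ → f v ∈ V₂ := by
    intro v hv
    rcases hadj v (f v) (M.adj_sub (hf v)) with ⟨_, h⟩ | ⟨h, _⟩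
    · exact h
    · exact absurd hv (fun hv => hside v hv h)
  have hopp2 : ∀ v, v ∈ V₂ → f v ∈ V₁ := by
    intro v hv
    rcases hadj v (f v) (M.adj_sub (hf v)) with ⟨h, _⟩ | ⟨_, h⟩
    · exact absurd h (fun h => hside v h hv)
    · exact h
  set A1 : Set V := {v | v ∈ X ∧ v ∈ V₁ ∧ f v ∈ X} with hA1d
  set A2 : Set V := {v | v ∈ X ∧ v ∈ V₁ ∧ f v ∉ X} with hA2d
  set C1 : Set V := {v | v ∈ X ∧ v ∈ V₂ ∧ f v ∈ X} with hC1d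
  set C2 : Set V := {v | v ∈ X ∧ v ∈ V₂ ∧ f v ∉ X} with hC2d
  have hmem12 : ∀ v : V, v ∈ V₁ ∨ v ∈ V₂ := by
    intro v
    have : v ∈ V₁ ∪ V₂ := by rw [hun]; trivial
    exact this
  refine ⟨A1.ncard, A2.ncard, C1.ncard, C2.ncard, ?_, ?_, ?_, ?_, ?_, ?_⟩
  · rw [← Set.ncard_union_eq (by
        rw [Set.disjoint_left]; rintro v ⟨_, _, h⟩ ⟨_, _, h'⟩; exact h' h)
      (Set.toFinite _) (Set.toFinite _)]
    congr 1
    ext v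
    constructor
    · rintro ⟨hx, hv⟩
      by_cases hfv : f v ∈ X
      · exact Or.inl ⟨hx, hv, hfv⟩
      · exact Or.inr ⟨hx, hv, hfv⟩
    · rintro (⟨hx, hv, _⟩ | ⟨hx, hv, _⟩) <;> exact ⟨hx, hv⟩
  · rw [← Set.ncard_union_eq (by
        rw [Set.disjoint_left]; rintro v ⟨_, _, h⟩ ⟨_, _, h'⟩; exact h' h)
      (Set.toFinite _) (Set.toFinite _)]
    congr 1
    ext v
    constructor
    · rintro ⟨hx, hv⟩
      by_cases hfv : f v ∈ X
      · exact Or.inl ⟨hx, hv, hfv⟩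
      · exact Or.inr ⟨hx, hv, hfv⟩
    · rintro (⟨hx, hv, _⟩ | ⟨hx, hv, _⟩) <;> exact ⟨hx, hv⟩
  · have himg : f '' A1 = C1 := by
      ext w
      constructor
      · rintro ⟨v, ⟨hx, hv, hfx⟩, rfl⟩
        exact ⟨hfx, hopp1 v hv, by rw [hinv]; exact hx⟩
      · rintro ⟨hx, hv, hfx⟩
        exact ⟨f w, ⟨hfx, hopp2 w hv, by rw [hinv]; exact hx⟩, hinv w⟩
    rw [← himg, Set.ncard_image_of_injective _ hfinj]
  · have hcross : M.edgeSet ∩ edgeCut B X = (fun v => s(v, f v)) '' (A2 ∪ C2) := by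
      ext e
      constructor
      · rintro ⟨heM, -, a, b, rfl, haX, hbX⟩
        have hab : M.Adj a b := SimpleGraph.Subgraph.mem_edgeSet.mp heM
        have hb : b = f a := hu a b hab
        refine ⟨a, ?_, by simp [hb]⟩
        rcases hmem12 a with h | h
        · exact Or.inl ⟨haX, h, hb ▸ hbX⟩
        · exact Or.inr ⟨haX, h, hb ▸ hbX⟩
      · rintro ⟨v, hv, rfl⟩
        have hvX : v ∈ X ∧ f v ∉ X := by
          rcases hv with ⟨h1, _, h3⟩ | ⟨h1, _, h3⟩ <;> exact ⟨h1, h3⟩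
        exact ⟨SimpleGraph.Subgraph.mem_edgeSet.mpr (hf v),
          (M.adj_sub (hf v)), v, f v, rfl, hvX.1, hvX.2⟩
    rw [hcross, Set.ncard_image_of_injOn (by
        rintro v hv w hw h
        simp only [Sym2.eq_iff] at h
        rcases h with ⟨h, _⟩ | ⟨h1, h2⟩
        · exact h
        · exfalso
          have hvX : v ∈ X := by rcases hv with ⟨h', _, _⟩ | ⟨h', _, _⟩ <;> exact h'
          have hfwX : f w ∉ X := by rcases hw with ⟨_, _, h'⟩ | ⟨_, _, h'⟩ <;> exact h'
          exact hfwX (h1 ▸ hvX)),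
      Set.ncard_union_eq (by
        rw [Set.disjoint_left]; rintro v ⟨_, h, _⟩ ⟨_, h', _⟩; exact hside v h h')
      (Set.toFinite _) (Set.toFinite _)]
  · rw [Set.ncard_eq_zero (Set.toFinite _)]
    constructor
    · intro hemp v hv w hw
      by_contra hwX
      have : v ∈ A2 := ⟨hv.1, hv.2, by rw [← hu v w hw]; exact hwX⟩
      rw [hemp] at this; exact this
    · intro h
      ext v
      simp only [Set.mem_empty_iff_false, iff_false]
      rintro ⟨hx, hv, hfv⟩
      exact hfv (h v ⟨hx, hv⟩ (f v) (hf v))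
  · rw [Set.ncard_eq_zero (Set.toFinite _)]
    constructor
    · intro hemp v hv w hw
      by_contra hwX
      have : v ∈ C2 := ⟨hv.1, hv.2, by rw [← hu v w hw]; exact hwX⟩
      rw [hemp] at this; exact this
    · intro h
      ext v
      simp only [Set.mem_empty_iff_false, iff_false]
      rintro ⟨hx, hv, hfv⟩
      exact hfv (h v ⟨hx, hv⟩ (f v) (hf v))


/-- In a bipartite matching covered graph `B` with bipartition
`(V₁, V₂)`, for `X` with `|X| ≥ 3` and `|V(B) ∖ X| ≥ 3`, `∂(X)` is a tight cut iff
there is `i ∈ {1,2}` with `|X ∩ V_i| = |X ∩ V_{3−i}| − 1` and `N_B(X ∩ V_i) ⊆ X`. -/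
theorem statement4 (V : Type) [Finite V] (B : SimpleGraph V) (V₁ V₂ : Set V)
    (hbip : IsBipartition B V₁ V₂) (hmc : MatchingCovered B)
    (X : Set V) (h1 : 3 ≤ X.ncard) (h2 : 3 ≤ ((Set.univ : Set V) \ X).ncard) :
    IsTightCut B X ↔
      (((X ∩ V₁).ncard + 1 = (X ∩ V₂).ncard ∧
          {v : V | ∃ s ∈ X ∩ V₁, B.Adj v s} ⊆ X) ∨
       ((X ∩ V₂).ncard + 1 = (X ∩ V₁).ncard ∧
          {v : V | ∃ s ∈ X ∩ V₂, B.Adj v s} ⊆ X)) := by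
  constructor
  · intro ht
    -- get a perfect matching
    have hxy : ∃ x ∈ X, ∃ y ∈ X, x ≠ y := by
      have := (Set.one_lt_ncard_iff (Set.toFinite X)).mp (by omega)
      obtain ⟨x, y, hx, hy, hne⟩ := this
      exact ⟨x, hx, y, hy, hne⟩
    obtain ⟨x, -, y, -, hxy⟩ := hxy
    obtain ⟨p⟩ := hmc.1 x y
    have hedge : ∃ a b : V, B.Adj a b := by
      cases p with
      | nil => exact absurd rfl hxy
      | cons h q => exact ⟨_, _, h⟩
    obtain ⟨a, b, hab⟩ := hedge
    obtain ⟨M, hM, -⟩ := hmc.2 s(a, b) (B.mem_edgeSet.mpr hab)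
    obtain ⟨a1, a2, c1, c2, hA, hC, hac, hcount, hA2, hC2⟩ :=
      matching_count V B V₁ V₂ hbip X M hM
    have h1' : a2 + c2 = 1 := by rw [← hcount]; exact ht M hM
    rcases (by omega : (a2 = 0 ∧ c2 = 1) ∨ (a2 = 1 ∧ c2 = 0)) with ⟨ha, hc⟩ | ⟨ha, hc⟩
    · left
      refine ⟨by omega, ?_⟩
      rintro v ⟨t, htmem, hvt⟩
      by_contra hv
      obtain ⟨M', hM', heM'⟩ := hmc.2 s(v, t) (B.mem_edgeSet.mpr hvt)
      obtain ⟨a1', a2', c1', c2', hA', hC', hac', hcount', hA2', hC2'⟩ :=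
        matching_count V B V₁ V₂ hbip X M' hM'
      have h1'' : a2' + c2' = 1 := by rw [← hcount']; exact ht M' hM'
      have hMvt : M'.Adj t v := (SimpleGraph.Subgraph.mem_edgeSet.mp heM').symm
      have ha2' : a2' ≠ 0 := by
        intro h0
        exact hv (hA2'.mp h0 t htmem v hMvt)
      omega
    · right
      refine ⟨by omega, ?_⟩
      rintro v ⟨t, htmem, hvt⟩
      by_contra hv
      obtain ⟨M', hM', heM'⟩ := hmc.2 s(v, t) (B.mem_edgeSet.mpr hvt)
      obtain ⟨a1', a2', c1', c2', hA', hC', hac', hcount', hA2', hC2'⟩ :=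
        matching_count V B V₁ V₂ hbip X M' hM'
      have h1'' : a2' + c2' = 1 := by rw [← hcount']; exact ht M' hM'
      have hMvt : M'.Adj t v := (SimpleGraph.Subgraph.mem_edgeSet.mp heM').symm
      have hc2' : c2' ≠ 0 := by
        intro h0
        exact hv (hC2'.mp h0 t htmem v hMvt)
      omega
  · rintro (⟨hcard, hsub⟩ | ⟨hcard, hsub⟩) M hM <;>
      obtain ⟨a1, a2, c1, c2, hA, hC, hac, hcount, hA2, hC2⟩ :=
        matching_count V B V₁ V₂ hbip X M hM
    · have ha : a2 = 0 := hA2.mpr (fun v hv w hw => hsub ⟨v, hv, (M.adj_sub hw).symm⟩)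
      rw [hcount]; omega
    · have hc : c2 = 0 := hC2.mpr (fun v hv w hw => hsub ⟨v, hv, (M.adj_sub hw).symm⟩)
      rw [hcount]; omega


end PaperMM
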